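/- Let X and Y be Banach spaces over 𝕜 (𝕜 = ℝ or ℂ). If the pair (X, Y) fails the uniform strong Bishop-Phelps-Bollobás property, then the pair (ℓ₂(X), ℓ_∞(Y)) fails the strong Bishop-Phelps-Bollobás property, where ℓ₂(X) is the space of sequences in X with square-summable norms and ℓ_∞(Y) is the space of bounded sequences in Y with the sup-norm. -/
import Mathlib

open scoped ENNReal

/-- A pair of Banach spaces `(X, Y)` has the strong Bishop-Phelps-Bollobás property. -/
def SBPBp (𝕜 : Type*) [RCLike 𝕜] (X Y : Type*) [NormedAddCommGroup X] [NormedSpace 𝕜 X]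
    [NormedAddCommGroup Y] [NormedSpace 𝕜 Y] : Prop :=
  ∀ ε : ℝ, 0 < ε → ∀ T : X →L[𝕜] Y, ‖T‖ = 1 →
    ∃ η : ℝ, 0 < η ∧ ∀ x₀ : X, ‖x₀‖ = 1 → 1 - η < ‖T x₀‖ →
      ∃ x₁ : X, ‖x₁‖ = 1 ∧ ‖T x₁‖ = 1 ∧ ‖x₁ - x₀‖ < ε

/-- A pair of Banach spaces `(X, Y)` has the uniform strong Bishop-Phelps-Bollobás
property. -/
def UniformSBPBp (𝕜 : Type*) [RCLike 𝕜] (X Y : Type*) [NormedAddCommGroup X]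
    [NormedSpace 𝕜 X] [NormedAddCommGroup Y] [NormedSpace 𝕜 Y] : Prop :=
  ∀ ε : ℝ, 0 < ε → ∃ η : ℝ, 0 < η ∧ ∀ T : X →L[𝕜] Y, ‖T‖ = 1 →
    ∀ x₀ : X, ‖x₀‖ = 1 → 1 - η < ‖T x₀‖ →
      ∃ x₁ : X, ‖x₁‖ = 1 ∧ ‖T x₁‖ = 1 ∧ ‖x₁ - x₀‖ < ε

section Aux

variable {𝕜 : Type*} [RCLike 𝕜] {X : Type*} [NormedAddCommGroup X] [NormedSpace 𝕜 X]
  {Y : Type*} [NormedAddCommGroup Y] [NormedSpace 𝕜 Y]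

private lemma memInfty_aux (T : ℕ → X →L[𝕜] Y) (hT : ∀ n, ‖T n‖ ≤ 1)
    (f : lp (fun _ : ℕ => X) 2) : Memℓp (fun k => T k (f k)) ∞ := by
  apply memℓp_infty
  refine ⟨‖f‖, ?_⟩
  rintro r ⟨k, rfl⟩
  calc ‖T k (f k)‖ ≤ ‖T k‖ * ‖f k‖ := (T k).le_opNorm _
    _ ≤ 1 * ‖f‖ := by
        apply mul_le_mul (hT k) (lp.norm_apply_le_norm (by norm_num) f k) (norm_nonneg _)
          zero_le_one
    _ = ‖f‖ := one_mul _

/-- The diagonal operator `ℓ₂(X) → ℓ_∞(Y)` built from a bounded sequence of operators. -/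
noncomputable def opHat (T : ℕ → X →L[𝕜] Y) (hT : ∀ n, ‖T n‖ ≤ 1) :
    lp (fun _ : ℕ => X) 2 →L[𝕜] lp (fun _ : ℕ => Y) ∞ :=
  LinearMap.mkContinuous
    { toFun := fun f => ⟨fun k => T k (f k), memInfty_aux T hT f⟩
      map_add' := fun f g => by
        apply lp.ext
        funext k
        show T k ((f + g) k) = T k (f k) + T k (g k)
        rw [lp.coeFn_add, Pi.add_apply, map_add]
      map_smul' := fun c f => by
        apply lp.ext
        funext k
        show T k ((c • f) k) = c • T k (f k)
        rw [lp.coeFn_smul, Pi.smul_apply, map_smul] }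
    1 (fun f => by
      rw [one_mul]
      apply lp.norm_le_of_forall_le (norm_nonneg f)
      intro k
      calc ‖T k (f k)‖ ≤ ‖T k‖ * ‖f k‖ := (T k).le_opNorm _
        _ ≤ 1 * ‖f‖ := mul_le_mul (hT k) (lp.norm_apply_le_norm (by norm_num) f k)
            (norm_nonneg _) zero_le_one
        _ = ‖f‖ := one_mul _)

lemma opHat_apply (T : ℕ → X →L[𝕜] Y) (hT : ∀ n, ‖T n‖ ≤ 1)
    (f : lp (fun _ : ℕ => X) 2) (k : ℕ) : opHat T hT f k = T k (f k) := rfl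

lemma opHat_norm_le (T : ℕ → X →L[𝕜] Y) (hT : ∀ n, ‖T n‖ ≤ 1) : ‖opHat T hT‖ ≤ 1 :=
  LinearMap.mkContinuous_norm_le _ zero_le_one _

end Aux

set_option maxHeartbeats 1000000 in
/-- If the pair `(X, Y)` fails the uniform strong Bishop-Phelps-Bollobás
property, then the pair `(ℓ₂(X), ℓ_∞(Y))` fails the strong Bishop-Phelps-Bollobás
property. -/
theorem lp_sum_fails_sBPBp_of_fails_uniform_sBPBp
    (𝕜 : Type*) [RCLike 𝕜]
    (X : Type*) [NormedAddCommGroup X] [NormedSpace 𝕜 X] [CompleteSpace X]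
    (Y : Type*) [NormedAddCommGroup Y] [NormedSpace 𝕜 Y] [CompleteSpace Y]
    (h : ¬ UniformSBPBp 𝕜 X Y) :
    ¬ SBPBp 𝕜 (lp (fun _ : ℕ => X) 2) (lp (fun _ : ℕ => Y) ∞) := by
  intro hs
  rw [UniformSBPBp] at h
  push_neg at h
  obtain ⟨ε, hε, hfail⟩ := h
  choose T hTnorm xs hxs hTxs hbad using fun n : ℕ =>
    hfail (1 / (n + 1)) (by positivity)
  set A := opHat T (fun n => le_of_eq (hTnorm n)) with hA_def
  have hAapp : ∀ (f : lp (fun _ : ℕ => X) 2) (k : ℕ), A f k = T k (f k) := fun f k => rfl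
  -- ‖A‖ = 1
  have h2 : ((2 : ℝ≥0∞)).toReal = 2 := by norm_num
  have h2pos : (0 : ℝ) < ((2 : ℝ≥0∞)).toReal := by norm_num
  have hsingle_norm : ∀ (n : ℕ) (x : X), ‖lp.single (E := fun _ : ℕ => X) 2 n x‖ = ‖x‖ := by
    intro n x
    simpa using lp.norm_single (E := fun _ : ℕ => X) h2pos (fun _ => x) n
  have hA_ge_coord : ∀ (f : lp (fun _ : ℕ => X) 2) (k : ℕ), ‖T k (f k)‖ ≤ ‖A f‖ := by
    intro f k
    simpa [hAapp] using lp.norm_apply_le_norm (ENNReal.top_ne_zero) (A f) k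
  have hAnorm : ‖A‖ = 1 := by
    refine le_antisymm (opHat_norm_le _ _) ?_
    by_contra hc
    push_neg at hc
    obtain ⟨n, hn⟩ := exists_nat_one_div_lt (by linarith : (0:ℝ) < 1 - ‖A‖)
    have h1 : ‖A (lp.single (E := fun _ : ℕ => X) 2 n (xs n))‖ ≤ ‖A‖ := by
      calc ‖A (lp.single (E := fun _ : ℕ => X) 2 n (xs n))‖ ≤ ‖A‖ * ‖lp.single (E := fun _ : ℕ => X) 2 n (xs n)‖ := A.le_opNorm _
        _ = ‖A‖ := by rw [hsingle_norm, hxs, mul_one]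
    have h3 : ‖T n (xs n)‖ ≤ ‖A (lp.single (E := fun _ : ℕ => X) 2 n (xs n))‖ := by
      have := hA_ge_coord (lp.single (E := fun _ : ℕ => X) 2 n (xs n)) n
      rwa [lp.single_apply_self] at this
    have := hTxs n
    linarith
  obtain ⟨η, hη, hgood⟩ := hs (min ε 1) (by positivity) A hAnorm
  obtain ⟨n, hn⟩ := exists_nat_one_div_lt hη
  set x₀ := lp.single (E := fun _ : ℕ => X) 2 n (xs n) with hx₀_def
  have hx₀ : ‖x₀‖ = 1 := by rw [hx₀_def, hsingle_norm, hxs]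
  have hTx₀ : 1 - η < ‖A x₀‖ := by
    have h3 : ‖T n (xs n)‖ ≤ ‖A x₀‖ := by
      have := hA_ge_coord x₀ n
      rwa [hx₀_def, lp.single_apply_self] at this
    have := hTxs n
    linarith
  obtain ⟨x₁, hx₁, hAx₁, hdist⟩ := hgood x₀ hx₀ hTx₀
  -- pairwise square bound
  have hpair : ∀ m k : ℕ, m ≠ k → ‖x₁ m‖ ^ 2 + ‖x₁ k‖ ^ 2 ≤ 1 := by
    intro m k hmk
    have := lp.sum_rpow_le_norm_rpow h2pos x₁ {m, k}
    rw [Finset.sum_insert (by simpa using hmk)] at this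
    rw [Finset.sum_singleton, h2, hx₁] at this
    simpa [Real.rpow_two] using this
  have hcoordle : ∀ k, ‖x₁ k‖ ≤ 1 := fun k =>
    (lp.norm_apply_le_norm (by norm_num) x₁ k).trans_eq hx₁
  -- find the big coordinate
  have hsqrt_lt : Real.sqrt 2⁻¹ < 1 := by
    rw [show (1:ℝ) = Real.sqrt 1 by simp]
    exact Real.sqrt_lt_sqrt (by norm_num) (by norm_num)
  obtain ⟨m, hm⟩ : ∃ m, Real.sqrt 2⁻¹ < ‖T m (x₁ m)‖ := by
    by_contra hc
    push_neg at hc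
    have : ‖A x₁‖ ≤ Real.sqrt 2⁻¹ :=
      lp.norm_le_of_forall_le (Real.sqrt_nonneg _) (fun k => by rw [hAapp]; exact hc k)
    rw [hAx₁] at this
    linarith
  have hxm_big : Real.sqrt 2⁻¹ < ‖x₁ m‖ := by
    have : ‖T m (x₁ m)‖ ≤ ‖x₁ m‖ := by
      calc ‖T m (x₁ m)‖ ≤ ‖T m‖ * ‖x₁ m‖ := (T m).le_opNorm _
        _ = ‖x₁ m‖ := by rw [hTnorm, one_mul]
    linarith
  have hxm_sq : (2:ℝ)⁻¹ < ‖x₁ m‖ ^ 2 := by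
    have h0 : (0:ℝ) ≤ Real.sqrt 2⁻¹ := Real.sqrt_nonneg _
    nlinarith [Real.sq_sqrt (by norm_num : (0:ℝ) ≤ 2⁻¹)]
  -- other coordinates are small
  have hsmall : ∀ k, k ≠ m → ‖x₁ k‖ ≤ Real.sqrt 2⁻¹ := by
    intro k hk
    have hp := hpair m k (fun e => hk e.symm)
    have hs2 : Real.sqrt 2⁻¹ ^ 2 = 2⁻¹ := Real.sq_sqrt (by norm_num)
    nlinarith [norm_nonneg (x₁ k), Real.sqrt_nonneg (2:ℝ)⁻¹, hxm_sq]
  -- T m (x₁ m) has norm 1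
  have hTm : ‖T m (x₁ m)‖ = 1 := by
    refine le_antisymm ((((T m).le_opNorm _).trans_eq (by rw [hTnorm, one_mul])).trans
      (hcoordle m)) ?_
    have hle : ‖A x₁‖ ≤ max ‖T m (x₁ m)‖ (Real.sqrt 2⁻¹) := by
      apply lp.norm_le_of_forall_le (le_max_of_le_left (norm_nonneg _))
      intro k
      rw [hAapp]
      rcases eq_or_ne k m with rfl | hk
      · exact le_max_left _ _
      · refine le_max_of_le_right ?_
        calc ‖T k (x₁ k)‖ ≤ ‖T k‖ * ‖x₁ k‖ := (T k).le_opNorm _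
          _ = ‖x₁ k‖ := by rw [hTnorm, one_mul]
          _ ≤ _ := hsmall k hk
    rw [hAx₁] at hle
    rcases le_max_iff.mp hle with h' | h'
    · exact h'
    · linarith
  have hxm1 : ‖x₁ m‖ = 1 := by
    refine le_antisymm (hcoordle m) ?_
    calc (1:ℝ) = ‖T m (x₁ m)‖ := hTm.symm
      _ ≤ ‖T m‖ * ‖x₁ m‖ := (T m).le_opNorm _
      _ = ‖x₁ m‖ := by rw [hTnorm, one_mul]
  have hzero : ∀ k, k ≠ m → x₁ k = 0 := by
    intro k hk
    have := hpair m k (fun e => hk e.symm)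
    rw [hxm1] at this
    have : ‖x₁ k‖ = 0 := by nlinarith [norm_nonneg (x₁ k)]
    exact norm_eq_zero.mp this
  -- coordinate bound on the distance
  have hdist_coord : ∀ k, ‖x₁ k - x₀ k‖ ≤ ‖x₁ - x₀‖ := by
    intro k
    have := lp.norm_apply_le_norm (by norm_num : (2:ℝ≥0∞) ≠ 0) (x₁ - x₀) k
    rwa [lp.coeFn_sub, Pi.sub_apply] at this
  -- m = n
  have hmn : m = n := by
    by_contra hmn
    have hx₁n : x₁ n = 0 := hzero n (fun e => hmn e.symm)
    have h1 : ‖x₁ n - x₀ n‖ = 1 := by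
      rw [hx₁n, hx₀_def, lp.single_apply_self, zero_sub, norm_neg, hxs]
    have := hdist_coord n
    have h2' : ‖x₁ - x₀‖ < 1 := lt_of_lt_of_le hdist (min_le_right _ _)
    linarith
  subst hmn
  -- contradiction with hbad
  have hfinal := hbad m (x₁ m) hxm1 hTm
  have h3 : ‖x₁ m - xs m‖ ≤ ‖x₁ - x₀‖ := by
    have := hdist_coord m
    rwa [hx₀_def, lp.single_apply_self] at this
  have h4 : ‖x₁ - x₀‖ < ε := lt_of_lt_of_le hdist (min_le_left _ _)
  linarith
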